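/- If R is a Γ-Armendariz ring and R is a right SA-ring, then the Hahn series ring R((Γ)) is a right SA-ring. -/

import Mathlib

/-- A two-sided ideal (as a subset). -/
def IsTwoSidedIdeal {S : Type*} [Ring S] (I : Set S) : Prop :=
  0 ∈ I ∧ (∀ a ∈ I, ∀ b ∈ I, a + b ∈ I) ∧ (∀ a ∈ I, -a ∈ I) ∧
    (∀ a ∈ I, ∀ r : S, a * r ∈ I) ∧ ∀ a ∈ I, ∀ r : S, r * a ∈ I

/-- The right annihilator of a subset. -/
def rAnn {S : Type*} [Ring S] (X : Set S) : Set S := {r : S | ∀ x ∈ X, x * r = 0}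

/-- A ring `S` is a right SA-ring if for any two ideals `I`, `J` there is an
ideal `K` with `r(I) + r(J) = r(K)`. -/
def IsRightSA (S : Type*) [Ring S] : Prop :=
  ∀ I J : Set S, IsTwoSidedIdeal I → IsTwoSidedIdeal J →
    ∃ K : Set S, IsTwoSidedIdeal K ∧
      {x : S | ∃ y ∈ rAnn I, ∃ z ∈ rAnn J, x = y + z} = rAnn K

/-- `R` is `Γ`-Armendariz: whenever a product of Hahn series vanishes, all
products of their coefficients vanish. -/
def IsGammaArmendariz (R : Type*) [Ring R] (Γ : Type*)
    [AddCommGroup Γ] [LinearOrder Γ] [IsOrderedAddMonoid Γ] : Prop :=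
  ∀ f g : HahnSeries Γ R, f * g = 0 → ∀ γ δ : Γ, f.coeff γ * g.coeff δ = 0

section Aux

variable {R : Type*} [Ring R] {Γ : Type*} [AddCommGroup Γ] [LinearOrder Γ] [IsOrderedAddMonoid Γ]

/-- The set of coefficients of elements of a set of Hahn series. -/
def coeffSet (I : Set (HahnSeries Γ R)) : Set R :=
  {a : R | ∃ f ∈ I, ∃ γ : Γ, f.coeff γ = a}

lemma mul_eq_zero_of_coeffs {f g : HahnSeries Γ R}
    (h : ∀ γ δ : Γ, f.coeff γ * g.coeff δ = 0) : f * g = 0 := by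
  ext a
  rw [HahnSeries.coeff_mul]
  exact Finset.sum_eq_zero fun ij _ => h _ _

lemma rAnn_add {X : Set R} {u v : R} (hu : u ∈ rAnn X) (hv : v ∈ rAnn X) :
    u + v ∈ rAnn X := fun x hx => by
  rw [mul_add, hu x hx, hv x hx, add_zero]

lemma rAnn_zero (X : Set R) : (0 : R) ∈ rAnn X := fun x _ => mul_zero x

lemma coeffSet_ideal {I : Set (HahnSeries Γ R)} (hI : IsTwoSidedIdeal I) :
    IsTwoSidedIdeal (coeffSet I) := by
  obtain ⟨h0, hadd, hneg, hmr, hml⟩ := hI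
  refine ⟨⟨0, h0, 0, rfl⟩, ?_, ?_, ?_, ?_⟩
  · rintro a ⟨f, hf, γ, rfl⟩ b ⟨g, hg, δ, rfl⟩
    have hg' : g * HahnSeries.single (γ - δ) (1 : R) ∈ I := hmr g hg _
    refine ⟨f + g * HahnSeries.single (γ - δ) (1 : R), hadd _ hf _ hg', γ, ?_⟩
    have h1 : (g * HahnSeries.single (γ - δ) (1 : R)).coeff γ = g.coeff δ := by
      have h2 : (g * HahnSeries.single (γ - δ) (1 : R)).coeff (δ + (γ - δ)) =
          g.coeff δ * 1 := HahnSeries.coeff_mul_single_add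
      rw [mul_one, show δ + (γ - δ) = γ by abel] at h2
      exact h2
    rw [HahnSeries.coeff_add, h1]
  · rintro a ⟨f, hf, γ, rfl⟩
    exact ⟨-f, hneg f hf, γ, rfl⟩
  · rintro a ⟨f, hf, γ, rfl⟩ r
    refine ⟨f * HahnSeries.single (0 : Γ) r, hmr f hf _, γ, ?_⟩
    have : (f * HahnSeries.single (0 : Γ) r).coeff (γ + 0) = f.coeff γ * r :=
      HahnSeries.coeff_mul_single_add
    rwa [add_zero] at this
  · rintro a ⟨f, hf, γ, rfl⟩ r
    refine ⟨HahnSeries.single (0 : Γ) r * f, hml f hf _, γ, ?_⟩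
    have : (HahnSeries.single (0 : Γ) r * f).coeff (γ + 0) = r * f.coeff γ :=
      HahnSeries.coeff_single_mul_add
    rwa [add_zero] at this

/-- Coefficients of an element of the right annihilator of an ideal annihilate
all the coefficients of the ideal, by the Armendariz property. -/
lemma coeff_mem_rAnn_coeffSet (hArm : IsGammaArmendariz R Γ)
    {I : Set (HahnSeries Γ R)} {g : HahnSeries Γ R} (hg : g ∈ rAnn I) (δ : Γ) :
    g.coeff δ ∈ rAnn (coeffSet I) := by
  rintro a ⟨f, hf, γ, rfl⟩
  exact hArm f g (hg f hf) γ δ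

end Aux

/-- If `R` is `Γ`-Armendariz and a right SA-ring, then the Hahn series ring
`R((Γ))` is a right SA-ring. -/
theorem rightSA_hahnSeries_of_rightSA {R : Type*} [Ring R] (Γ : Type*)
    [AddCommGroup Γ] [LinearOrder Γ] [IsOrderedAddMonoid Γ] (hArm : IsGammaArmendariz R Γ)
    (hSA : IsRightSA R) : IsRightSA (HahnSeries Γ R) := by
  intro I J hI hJ
  obtain ⟨K₀, hK₀, hEq⟩ := hSA (coeffSet I) (coeffSet J) (coeffSet_ideal hI)
    (coeffSet_ideal hJ)
  obtain ⟨hK0, hKadd, hKneg, hKmr, hKml⟩ := hK₀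
  -- sums of elements of K₀ lie in K₀
  have hKsum : ∀ {ι : Type _} (s : Finset ι) (F : ι → R),
      (∀ i ∈ s, F i ∈ K₀) → ∑ i ∈ s, F i ∈ K₀ := by
    intro ι s F hF
    classical
    induction s using Finset.induction_on with
    | empty => simpa using hK0
    | @insert a s' h ih =>
      rw [Finset.sum_insert h]
      exact hKadd _ (hF a (Finset.mem_insert_self a s'))
        _ (ih fun i hi => hF i (Finset.mem_insert_of_mem hi))
  refine ⟨{f : HahnSeries Γ R | ∀ γ : Γ, f.coeff γ ∈ K₀}, ?_, ?_⟩
  · refine ⟨fun γ => by simpa using hK0, ?_, ?_, ?_, ?_⟩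
    · intro a ha b hb γ
      rw [HahnSeries.coeff_add]
      exact hKadd _ (ha γ) _ (hb γ)
    · intro a ha γ
      rw [HahnSeries.coeff_neg]
      exact hKneg _ (ha γ)
    · intro a ha r γ
      rw [HahnSeries.coeff_mul]
      exact hKsum _ _ fun ij _ => hKmr _ (ha ij.1) _
    · intro a ha r γ
      rw [HahnSeries.coeff_mul]
      exact hKsum _ _ fun ij _ => hKml _ (ha ij.2) _
  · ext g
    constructor
    · rintro ⟨y, hy, z, hz, rfl⟩
      -- every coefficient of y + z lies in rAnn K₀
      have hcoeff : ∀ δ : Γ, (y + z).coeff δ ∈ rAnn K₀ := by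
        intro δ
        rw [HahnSeries.coeff_add]
        have hyδ : y.coeff δ ∈ rAnn K₀ := by
          rw [← hEq]
          exact ⟨y.coeff δ, coeff_mem_rAnn_coeffSet hArm hy δ, 0,
            rAnn_zero _, (add_zero _).symm⟩
        have hzδ : z.coeff δ ∈ rAnn K₀ := by
          rw [← hEq]
          exact ⟨0, rAnn_zero _, z.coeff δ,
            coeff_mem_rAnn_coeffSet hArm hz δ, (zero_add _).symm⟩
        exact rAnn_add hyδ hzδ
      intro f hf
      exact mul_eq_zero_of_coeffs fun γ δ => hcoeff δ _ (hf γ)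
    · intro hg
      -- every coefficient of g lies in rAnn K₀
      have hg' : ∀ δ : Γ, g.coeff δ ∈ rAnn K₀ := by
        intro δ k hk
        have hsk : HahnSeries.single (0 : Γ) k ∈
            {f : HahnSeries Γ R | ∀ γ : Γ, f.coeff γ ∈ K₀} := by
          intro γ
          rw [HahnSeries.coeff_single]
          split <;> simp_all
        have h0 : (HahnSeries.single (0 : Γ) k * g) = 0 := hg _ hsk
        have : (HahnSeries.single (0 : Γ) k * g).coeff (δ + 0) = k * g.coeff δ :=
          HahnSeries.coeff_single_mul_add
        rw [h0] at this
        simpa using this.symm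
      -- decompose each coefficient
      have hdec : ∀ δ : Γ, ∃ u ∈ rAnn (coeffSet I), ∃ v ∈ rAnn (coeffSet J),
          g.coeff δ = u + v := by
        intro δ
        have := hg' δ
        rw [← hEq] at this
        obtain ⟨u, hu, v, hv, huv⟩ := this
        exact ⟨u, hu, v, hv, huv⟩
      classical
      choose U hU V hV hUV using hdec
      -- build the Hahn series y with coefficients U (supported in supp g)
      set Yc : Γ → R := fun δ => if g.coeff δ = 0 then 0 else U δ with hYc
      have hYsupp : Function.support Yc ⊆ g.support := by
        intro δ hδ
        simp only [hYc, Function.mem_support] at hδ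
        by_contra h
        simp only [HahnSeries.mem_support, not_not] at h
        simp [h] at hδ
      set y : HahnSeries Γ R := ⟨Yc, g.isPWO_support.mono hYsupp⟩ with hy
      have hyI : ∀ δ : Γ, y.coeff δ ∈ rAnn (coeffSet I) := by
        intro δ
        show Yc δ ∈ _
        simp only [hYc]
        split
        · exact rAnn_zero _
        · exact hU δ
      have hzJ : ∀ δ : Γ, (g - y).coeff δ ∈ rAnn (coeffSet J) := by
        intro δ
        rw [HahnSeries.coeff_sub]
        show g.coeff δ - Yc δ ∈ _
        simp only [hYc]
        split
        · rename_i h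
          simp only [h, sub_zero]
          exact rAnn_zero _
        · rw [hUV δ]
          simp only [add_sub_cancel_left]
          exact hV δ
      refine ⟨y, ?_, g - y, ?_, by abel⟩
      · intro f hf
        exact mul_eq_zero_of_coeffs fun γ δ =>
          hyI δ _ ⟨f, hf, γ, rfl⟩
      · intro f hf
        exact mul_eq_zero_of_coeffs fun γ δ =>
          hzJ δ _ ⟨f, hf, γ, rfl⟩
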